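/- Let N ≥ 2 and I ⊆ {1,…,N−1}. Every x ∈ C₋° can be written (uniquely, since the vectors involved form a basis of 𝔥) as x = Σ_{i∈I} a_i e_i + Σ_{j∉I} b_j f_j, and in this decomposition a_i < 0 for all i ∈ I and b_j ≤ 0 for all j ∉ I. Conversely, for every family of negative reals (a_i)_{i∈I} there exist reals b_j, j ∉ I, such that Σ_{i∈I} a_i e_i + Σ_{j∉I} b_j f_j ∈ C₋°. Consequently, the image of C₋° under the projection of 𝔥 onto the span of { e_i : i ∈ I } along the span of { f_j : j ∉ I } is exactly { Σ_{i∈I} a_i e_i : a_i < 0 for all i ∈ I }. -/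

import Mathlib

open BigOperators

/-- The simple-root vector `f_{k+1}` (1-based index `k+1`, `k : Fin (N-1)`):
coordinate `1` at position `k`, `-1` at position `k+1` (0-based), `0` elsewhere. -/
def fvec (N : ℕ) (k : Fin (N - 1)) : Fin N → ℝ := fun j =>
  if (j : ℕ) = (k : ℕ) then 1 else if (j : ℕ) = (k : ℕ) + 1 then -1 else 0

/-- The coweight vector `e_{k+1}` (1-based index `m = k+1`, `k : Fin (N-1)`): the first `m`
coordinates equal `(N - m)/N` and the remaining `N - m` coordinates equal `-m/N`. -/
noncomputable def evec (N : ℕ) (k : Fin (N - 1)) : Fin N → ℝ := fun j =>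
  if (j : ℕ) < (k : ℕ) + 1 then ((N : ℝ) - ((k : ℕ) + 1)) / N else -(((k : ℕ) + 1 : ℕ) : ℝ) / N

/-- Membership in the interior `C₋°` of the negative Weyl chamber:
sum of coordinates zero and strictly increasing coordinates. -/
def inNegChamberInt {N : ℕ} (x : Fin N → ℝ) : Prop :=
  (∑ j, x j = 0) ∧ StrictMono x

namespace Stmt10

lemma fvec_eq (N : ℕ) (k : Fin (N-1)) (j : Fin N) :
    fvec N k j = (if (j:ℕ) = (k:ℕ) then (1:ℝ) else 0) + (if (j:ℕ) = (k:ℕ)+1 then (-1:ℝ) else 0) := by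
  unfold fvec
  split_ifs <;> first | omega | ring

lemma sum_indic {M : ℕ} (g : Fin M → ℝ) (a : ℕ) :
    (∑ k : Fin M, if (k:ℕ) = a then g k else 0) = if h : a < M then g ⟨a,h⟩ else 0 := by
  split_ifs with h
  · rw [show (∑ k : Fin M, if (k:ℕ) = a then g k else 0)
        = ∑ k : Fin M, if k = ⟨a,h⟩ then g k else 0 by
      apply Finset.sum_congr rfl; intro k _
      congr 1
      simp [Fin.ext_iff]]
    simp
  · apply Finset.sum_eq_zero; intro k _
    rw [if_neg]; omega

lemma evec_diff (N : ℕ) (hN : 2 ≤ N) (k : Fin (N-1)) (t : ℕ) (h1 : t < N) (h2 : t + 1 < N) :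
    evec N k ⟨t, h1⟩ - evec N k ⟨t+1, h2⟩ = if t = (k:ℕ) then 1 else 0 := by
  have hk := k.isLt
  have hNne : (N:ℝ) ≠ 0 := by
    have : 0 < N := by omega
    exact_mod_cast this.ne'
  unfold evec
  simp only []
  split_ifs with a b c <;> push_cast <;> first | omega | (field_simp; try ring) | rfl

lemma fvec_diff (N : ℕ) (k : Fin (N-1)) (t : ℕ) (h1 : t < N) (h2 : t + 1 < N) :
    fvec N k ⟨t, h1⟩ - fvec N k ⟨t+1, h2⟩ =
      (if t = (k:ℕ) then 2 else 0) + (if t = (k:ℕ)+1 then -1 else 0)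
        + (if t+1 = (k:ℕ) then -1 else 0) := by
  unfold fvec
  simp only []
  split_ifs <;> first | omega | ring

lemma sum_fvec (N : ℕ) (k : Fin (N-1)) : ∑ j, fvec N k j = 0 := by
  have hk : (k:ℕ) + 1 < N := by have := k.isLt; omega
  calc ∑ j, fvec N k j
      = ∑ j : Fin N, ((if (j:ℕ) = (k:ℕ) then (1:ℝ) else 0)
          + (if (j:ℕ) = (k:ℕ)+1 then (-1:ℝ) else 0)) := by
        exact Finset.sum_congr rfl fun j _ => fvec_eq N k j
    _ = 0 := by
        rw [Finset.sum_add_distrib,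
          sum_indic (fun _ => (1:ℝ)) (k:ℕ), sum_indic (fun _ => (-1:ℝ)) ((k:ℕ)+1)]
        rw [dif_pos (by omega : (k:ℕ) < N), dif_pos hk]
        ring

lemma sum_ite_lt (N m : ℕ) (hm : m ≤ N) (A B : ℝ) :
    ∑ j : Fin N, (if (j:ℕ) < m then A else B) = m * A + (N - m : ℕ) * B := by
  rw [Fin.sum_univ_eq_sum_range (fun j => if j < m then A else B)]
  rw [Finset.range_eq_Ico, ← Finset.sum_Ico_consecutive _ (Nat.zero_le m) hm]
  rw [Finset.sum_congr rfl (fun j hj => if_pos (Finset.mem_Ico.mp hj).2),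
      Finset.sum_congr rfl (g := fun _ => B) (fun j hj => if_neg (by
        have := (Finset.mem_Ico.mp hj).1; omega))]
  simp [Finset.sum_const, Nat.card_Ico, mul_comm]

lemma sum_evec (N : ℕ) (hN : 2 ≤ N) (k : Fin (N-1)) : ∑ j, evec N k j = 0 := by
  have hk : (k:ℕ) + 1 < N := by have := k.isLt; omega
  unfold evec
  rw [sum_ite_lt N ((k:ℕ)+1) (by omega)]
  have : ((N - ((k:ℕ)+1) : ℕ) : ℝ) = (N:ℝ) - ((k:ℕ)+1) := by push_cast [Nat.cast_sub (by omega : (k:ℕ)+1 ≤ N)]; ring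
  rw [this]
  have hNne : (N:ℝ) ≠ 0 := by
    have : 0 < N := by omega
    exact_mod_cast this.ne'
  push_cast
  field_simp
  ring

lemma strictMono_of_succ {N : ℕ} (f : Fin N → ℝ)
    (h : ∀ t (ht : t+1 < N), f ⟨t, by omega⟩ < f ⟨t+1, ht⟩) : StrictMono f := by
  have key : ∀ b (hb : b < N) a (ha : a < N), a < b → f ⟨a, ha⟩ < f ⟨b, hb⟩ := by
    intro b
    induction b with
    | zero => intro hb a ha hab; omega
    | succ b ih =>
      intro hb a ha hab
      rcases Nat.lt_or_ge a b with hab' | hab'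
      · exact lt_trans (ih (by omega) a ha hab') (h b hb)
      · have : a = b := by omega
        subst this
        exact h a hb
  intro i j hij
  have := key (j:ℕ) j.isLt (i:ℕ) i.isLt hij
  simpa using this

lemma eq_of_sum_and_diff {N : ℕ} (hN : 0 < N) (f g : Fin N → ℝ)
    (hs : ∑ j, f j = ∑ j, g j)
    (hd : ∀ t (ht : t+1 < N), f ⟨t, by omega⟩ - f ⟨t+1, ht⟩ = g ⟨t, by omega⟩ - g ⟨t+1, ht⟩) :
    f = g := by
  set d : Fin N → ℝ := fun j => f j - g j with hdd
  have hconst : ∀ t (ht : t < N), d ⟨t, ht⟩ = d ⟨0, hN⟩ := by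
    intro t
    induction t with
    | zero => intro ht; rfl
    | succ t ih =>
      intro ht
      have h1 := hd t ht
      have h2 := ih (by omega)
      simp only [hdd] at *
      linarith
  have hsum : ∑ j, d j = 0 := by
    simp only [hdd, Finset.sum_sub_distrib, hs, sub_self]
  have hconst' : ∀ j : Fin N, d j = d ⟨0, hN⟩ := fun j => by
    have := hconst j.1 j.2; simpa using this
  have : ∑ j : Fin N, d j = (N:ℝ) * d ⟨0, hN⟩ := by
    rw [Finset.sum_congr rfl (fun j _ => hconst' j)]
    simp [Finset.sum_const, mul_comm]
  have hz : d ⟨0, hN⟩ = 0 := by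
    have hNne : (N:ℝ) ≠ 0 := by exact_mod_cast hN.ne'
    rw [this] at hsum
    exact (mul_eq_zero.mp hsum).resolve_left hNne
  funext j
  have h3 : d j = 0 := (hconst' j).trans hz
  simp only [hdd] at h3
  linarith

def dot {N : ℕ} (u v : Fin N → ℝ) : ℝ := ∑ t, u t * v t

lemma dot_comm {N : ℕ} (u v : Fin N → ℝ) : dot u v = dot v u := by
  unfold dot; exact Finset.sum_congr rfl fun t _ => mul_comm _ _

lemma dot_sum_left {N : ℕ} {ι : Type*} (s : Finset ι) (f : ι → Fin N → ℝ) (a : ι → ℝ)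
    (v : Fin N → ℝ) :
    dot (fun t => ∑ i ∈ s, a i * f i t) v = ∑ i ∈ s, a i * dot (f i) v := by
  unfold dot
  simp only [Finset.sum_mul, Finset.mul_sum, mul_assoc]
  rw [Finset.sum_comm]

lemma dot_evec_fvec (N : ℕ) (hN : 2 ≤ N) (k m : Fin (N-1)) :
    dot (evec N k) (fvec N m) = if k = m then 1 else 0 := by
  have hm : (m:ℕ) + 1 < N := by have := m.isLt; omega
  have hm0 : (m:ℕ) < N := by omega
  unfold dot
  calc ∑ t : Fin N, evec N k t * fvec N m t
      = ∑ t : Fin N, ((if (t:ℕ) = (m:ℕ) then evec N k t else 0)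
          + (if (t:ℕ) = (m:ℕ)+1 then -(evec N k t) else 0)) := by
        refine Finset.sum_congr rfl fun t _ => ?_
        rw [fvec_eq]
        split_ifs <;> first | omega | ring
    _ = evec N k ⟨m, hm0⟩ - evec N k ⟨(m:ℕ)+1, hm⟩ := by
        rw [Finset.sum_add_distrib, sum_indic (fun t => evec N k t) (m:ℕ),
          sum_indic (fun t => -(evec N k t)) ((m:ℕ)+1), dif_pos hm0, dif_pos hm]
        ring
    _ = if k = m then 1 else 0 := by
        rw [evec_diff N hN k (m:ℕ) hm0 hm]
        congr 1
        simp [Fin.ext_iff, eq_comm]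

lemma indep (N : ℕ) (hN : 2 ≤ N) (I : Finset (Fin (N-1))) (c : Fin (N-1) → ℝ)
    (h : ∀ t : Fin N, (∑ i ∈ I, c i * evec N i t) + (∑ i ∈ Iᶜ, c i * fvec N i t) = 0) :
    ∀ k, c k = 0 := by
  set E : Fin N → ℝ := fun t => ∑ i ∈ I, c i * evec N i t with hE
  set F : Fin N → ℝ := fun t => ∑ i ∈ Iᶜ, c i * fvec N i t with hF
  have hFE : ∀ t, F t = -E t := fun t => by have := h t; simp only [hE, hF]; linarith
  have hdEF : dot E F = 0 := by
    rw [hE, dot_sum_left I (fun i => evec N i) c F]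
    apply Finset.sum_eq_zero
    intro i hi
    have : dot (evec N i) F = 0 := by
      rw [dot_comm, hF, dot_sum_left Iᶜ (fun j => fvec N j) c (evec N i)]
      apply Finset.sum_eq_zero
      intro j hj
      rw [dot_comm, dot_evec_fvec N hN i j, if_neg, mul_zero]
      intro hij
      exact (Finset.mem_compl.mp hj) (hij ▸ hi)
    rw [this, mul_zero]
  have hEzero : ∀ t, E t = 0 := by
    have hsq : ∑ t : Fin N, (E t)^2 = 0 := by
      have : dot E F = -∑ t : Fin N, (E t)^2 := by
        unfold dot
        rw [← Finset.sum_neg_distrib]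
        exact Finset.sum_congr rfl fun t _ => by rw [hFE t]; ring
      rw [this] at hdEF; linarith
    intro t
    have := (Finset.sum_eq_zero_iff_of_nonneg (fun t _ => sq_nonneg (E t))).mp hsq t (Finset.mem_univ t)
    exact pow_eq_zero_iff (by norm_num) |>.mp this
  have hFzero : ∀ t, F t = 0 := fun t => by rw [hFE t, hEzero t, neg_zero]
  intro k
  by_cases hk : k ∈ I
  · have h1 : dot E (fvec N k) = 0 := by
      unfold dot; exact Finset.sum_eq_zero fun t _ => by rw [hEzero t, zero_mul]
    rw [hE, dot_sum_left I (fun i => evec N i) c (fvec N k)] at h1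
    have h2 : ∑ i ∈ I, c i * dot (evec N i) (fvec N k) = c k := by
      rw [Finset.sum_congr rfl (fun i _ => by rw [dot_evec_fvec N hN i k])]
      simp only [mul_ite, mul_one, mul_zero]
      rw [Finset.sum_ite_eq' I k c]
      exact if_pos hk
    rw [h2] at h1; exact h1
  · have h1 : dot F (evec N k) = 0 := by
      unfold dot; exact Finset.sum_eq_zero fun t _ => by rw [hFzero t, zero_mul]
    rw [hF, dot_sum_left Iᶜ (fun j => fvec N j) c (evec N k)] at h1
    have h2 : ∑ j ∈ Iᶜ, c j * dot (fvec N j) (evec N k) = c k := by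
      rw [Finset.sum_congr rfl (fun j _ => by rw [dot_comm, dot_evec_fvec N hN k j])]
      rw [Finset.sum_congr rfl (fun j _ => by rw [show (if k = j then (1:ℝ) else 0) = if j = k then 1 else 0 from by simp [eq_comm]])]
      simp only [mul_ite, mul_one, mul_zero]
      rw [Finset.sum_ite_eq' Iᶜ k c]
      exact if_pos (Finset.mem_compl.mpr hk)
    rw [h2] at h1; exact h1

noncomputable def combo (N : ℕ) (I : Finset (Fin (N-1))) (c : Fin (N-1) → ℝ) : Fin N → ℝ :=
  ∑ k, c k • (if k ∈ I then evec N k else fvec N k)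

lemma combo_apply (N : ℕ) (I : Finset (Fin (N-1))) (c : Fin (N-1) → ℝ) (t : Fin N) :
    combo N I c t = ∑ k, c k * (if k ∈ I then evec N k t else fvec N k t) := by
  unfold combo
  rw [Finset.sum_apply]
  exact Finset.sum_congr rfl fun k _ => by
    rw [Pi.smul_apply, smul_eq_mul, apply_ite (fun v : Fin N → ℝ => v t)]

lemma combo_sum (N : ℕ) (hN : 2 ≤ N) (I : Finset (Fin (N-1))) (c : Fin (N-1) → ℝ) :
    ∑ j, combo N I c j = 0 := by
  rw [Finset.sum_congr rfl fun j _ => combo_apply N I c j, Finset.sum_comm]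
  apply Finset.sum_eq_zero
  intro k _
  rw [← Finset.mul_sum]
  by_cases hk : k ∈ I
  · simp only [hk, if_true, sum_evec N hN k, mul_zero]
  · simp only [hk, if_false, sum_fvec N k, mul_zero]

lemma combo_split (N : ℕ) (I : Finset (Fin (N-1))) (c : Fin (N-1) → ℝ) :
    combo N I c = (∑ i ∈ I, c i • evec N i) + ∑ j ∈ Iᶜ, c j • fvec N j := by
  unfold combo
  rw [← Finset.sum_add_sum_compl I]
  congr 1
  · exact Finset.sum_congr rfl fun k hk => by rw [if_pos hk]
  · exact Finset.sum_congr rfl fun k hk => by rw [if_neg (Finset.mem_compl.mp hk)]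

noncomputable def gam (N : ℕ) (I : Finset (Fin (N-1))) (c : Fin (N-1) → ℝ) (m : ℕ) : ℝ :=
  if h : 1 ≤ m ∧ m ≤ N - 1 then
    (if (⟨m-1, by omega⟩ : Fin (N-1)) ∈ I then 0 else c ⟨m-1, by omega⟩) else 0

lemma combo_diff (N : ℕ) (hN : 2 ≤ N) (I : Finset (Fin (N-1))) (c : Fin (N-1) → ℝ)
    (t : ℕ) (ht : t + 1 < N) (htI : t < N - 1) :
    combo N I c ⟨t, by omega⟩ - combo N I c ⟨t+1, ht⟩ =
      (if (⟨t, htI⟩ : Fin (N-1)) ∈ I then c ⟨t, htI⟩ else 0)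
        + (2 * gam N I c (t+1) - gam N I c t - gam N I c (t+2)) := by
  have h1 : (t : ℕ) < N := by omega
  rw [combo_apply, combo_apply, ← Finset.sum_sub_distrib]
  have key : ∀ k : Fin (N-1),
      c k * (if k ∈ I then evec N k ⟨t, h1⟩ else fvec N k ⟨t, h1⟩)
        - c k * (if k ∈ I then evec N k ⟨t+1, ht⟩ else fvec N k ⟨t+1, ht⟩)
      = (if (k:ℕ) = t then (if k ∈ I then c k else 2 * c k) else 0)
        + (if ((k:ℕ)+1 = t ∧ k ∉ I) then -(c k) else 0)
        + (if ((k:ℕ) = t+1 ∧ k ∉ I) then -(c k) else 0) := by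
    intro k
    by_cases hk : k ∈ I
    · simp only [hk, if_true, not_true, and_false, if_false]
      rw [← mul_sub, evec_diff N hN k t h1 ht]
      split_ifs <;> first | omega | ring
    · simp only [hk, if_false, not_false_iff, and_true]
      rw [← mul_sub, fvec_diff N k t h1 ht]
      split_ifs <;> first | omega | ring
  rw [Finset.sum_congr rfl fun k _ => key k]
  rw [Finset.sum_add_distrib, Finset.sum_add_distrib]
  have s1 : (∑ k : Fin (N-1), if (k:ℕ) = t then (if k ∈ I then c k else 2 * c k) else 0)
      = if (⟨t, htI⟩ : Fin (N-1)) ∈ I then c ⟨t, htI⟩ else 2 * c ⟨t, htI⟩ := by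
    rw [sum_indic (fun k => if k ∈ I then c k else 2 * c k) t, dif_pos htI]
  have s2 : (∑ k : Fin (N-1), if ((k:ℕ)+1 = t ∧ k ∉ I) then -(c k) else 0)
      = -(gam N I c t) := by
    cases t with
    | zero =>
      rw [Finset.sum_eq_zero (fun k _ => by rw [if_neg]; omega)]
      rw [show gam N I c 0 = 0 from by unfold gam; rw [dif_neg]; omega]
      ring
    | succ s =>
      have hs : s < N - 1 := by omega
      rw [Finset.sum_congr rfl (fun (k : Fin (N-1)) _ => show
          (if ((k:ℕ)+1 = s+1 ∧ k ∉ I) then -(c k) else 0)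
            = (if (k:ℕ) = s then (if k ∉ I then -(c k) else 0) else 0) from by
        by_cases hkI : k ∉ I <;>
          simp only [hkI, and_true, and_false, if_false, ite_self, not_false_iff,
            eq_self_iff_true, if_true] <;>
          first | rfl | omega | (split_ifs <;> first | rfl | omega))]
      rw [sum_indic (fun k => if k ∉ I then -(c k) else 0) s, dif_pos hs]
      unfold gam
      rw [dif_pos (by omega : 1 ≤ s+1 ∧ s+1 ≤ N-1)]
      simp only [Nat.add_sub_cancel]
      split_ifs <;> ring
  have s3 : (∑ k : Fin (N-1), if ((k:ℕ) = t+1 ∧ k ∉ I) then -(c k) else 0)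
      = -(gam N I c (t+2)) := by
    rw [Finset.sum_congr rfl (fun (k : Fin (N-1)) _ => show
        (if ((k:ℕ) = t+1 ∧ k ∉ I) then -(c k) else 0)
          = (if (k:ℕ) = t+1 then (if k ∉ I then -(c k) else 0) else 0) from by
      by_cases hkI : k ∉ I <;>
        simp only [hkI, and_true, and_false, if_false, ite_self, not_false_iff,
          eq_self_iff_true, if_true] <;>
        first | rfl | omega | (split_ifs <;> first | rfl | omega))]
    rw [sum_indic (fun k => if k ∉ I then -(c k) else 0) (t+1)]
    by_cases h' : t + 1 < N - 1
    · rw [dif_pos h']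
      unfold gam
      rw [dif_pos (by omega : 1 ≤ t+2 ∧ t+2 ≤ N-1)]
      simp only [show t+2-1 = t+1 from rfl]
      split_ifs <;> ring
    · rw [dif_neg h']
      unfold gam
      rw [dif_neg (by omega)]
      ring
  rw [s1, s2, s3]
  have g1 : gam N I c (t+1) = if (⟨t, htI⟩ : Fin (N-1)) ∈ I then 0 else c ⟨t, htI⟩ := by
    unfold gam
    rw [dif_pos (by omega : 1 ≤ t+1 ∧ t+1 ≤ N-1)]
    simp only [Nat.add_sub_cancel]
  rw [g1]
  split_ifs <;> ring

noncomputable def Sfun (N : ℕ) (x : Fin N → ℝ) (m : ℕ) : ℝ :=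
  ∑ u ∈ Finset.range m, (if h : u < N then x ⟨u, h⟩ else 0)

lemma Sfun_succ (N : ℕ) (x : Fin N → ℝ) (m : ℕ) (h : m < N) :
    Sfun N x (m+1) = Sfun N x m + x ⟨m, h⟩ := by
  unfold Sfun
  rw [Finset.sum_range_succ, dif_pos h]

def Uset (N : ℕ) (I : Finset (Fin (N-1))) : Finset ℕ :=
  insert 0 (insert N (I.image (fun i : Fin (N-1) => (i:ℕ)+1)))

lemma zero_mem_U (N : ℕ) (I : Finset (Fin (N-1))) : 0 ∈ Uset N I := by simp [Uset]

lemma N_mem_U (N : ℕ) (I : Finset (Fin (N-1))) : N ∈ Uset N I := by simp [Uset]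

lemma mem_U_iff (N : ℕ) (I : Finset (Fin (N-1))) (u : ℕ) :
    u ∈ Uset N I ↔ u = 0 ∨ u = N ∨ ∃ i ∈ I, (i:ℕ)+1 = u := by
  simp [Uset]

noncomputable def pB (N : ℕ) (I : Finset (Fin (N-1))) (m : ℕ) : ℕ :=
  if h : ((Uset N I).filter (· < m)).Nonempty then ((Uset N I).filter (· < m)).max' h else 0

noncomputable def qB (N : ℕ) (I : Finset (Fin (N-1))) (m : ℕ) : ℕ :=
  if h : ((Uset N I).filter (fun u => m < u)).Nonempty then
    ((Uset N I).filter (fun u => m < u)).min' h else N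

section pqB

variable (N : ℕ) (I : Finset (Fin (N-1))) (m : ℕ)

lemma pB_ne (hm : 1 ≤ m) : ((Uset N I).filter (· < m)).Nonempty :=
  ⟨0, Finset.mem_filter.mpr ⟨zero_mem_U N I, by omega⟩⟩

lemma qB_ne (hm : m < N) : ((Uset N I).filter (fun u => m < u)).Nonempty :=
  ⟨N, Finset.mem_filter.mpr ⟨N_mem_U N I, hm⟩⟩

lemma pB_lt (hm : 1 ≤ m) : pB N I m < m := by
  unfold pB
  rw [dif_pos (pB_ne N I m hm)]
  have := Finset.max'_mem _ (pB_ne N I m hm)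
  exact (Finset.mem_filter.mp this).2

lemma pB_mem (hm : 1 ≤ m) : pB N I m ∈ Uset N I := by
  unfold pB
  rw [dif_pos (pB_ne N I m hm)]
  have := Finset.max'_mem _ (pB_ne N I m hm)
  exact (Finset.mem_filter.mp this).1

lemma le_pB (hm : 1 ≤ m) (u : ℕ) (hu : u ∈ Uset N I) (hum : u < m) : u ≤ pB N I m := by
  unfold pB
  rw [dif_pos (pB_ne N I m hm)]
  exact Finset.le_max' ((Uset N I).filter (· < m)) u (Finset.mem_filter.mpr ⟨hu, hum⟩)

lemma qB_gt (hm : m < N) : m < qB N I m := by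
  unfold qB
  rw [dif_pos (qB_ne N I m hm)]
  have := Finset.min'_mem _ (qB_ne N I m hm)
  exact (Finset.mem_filter.mp this).2

lemma qB_mem (hm : m < N) : qB N I m ∈ Uset N I := by
  unfold qB
  rw [dif_pos (qB_ne N I m hm)]
  have := Finset.min'_mem _ (qB_ne N I m hm)
  exact (Finset.mem_filter.mp this).1

lemma qB_le (hm : m < N) (u : ℕ) (hu : u ∈ Uset N I) (hum : m < u) : qB N I m ≤ u := by
  unfold qB
  rw [dif_pos (qB_ne N I m hm)]
  exact Finset.min'_le ((Uset N I).filter (fun u => m < u)) u (Finset.mem_filter.mpr ⟨hu, hum⟩)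

lemma qB_le_N (hm : m < N) : qB N I m ≤ N :=
  qB_le N I m hm N (N_mem_U N I) hm

lemma pB_succ (hmU : m ∉ Uset N I) : pB N I (m+1) = pB N I m := by
  have hset : (Uset N I).filter (· < m+1) = (Uset N I).filter (· < m) := by
    apply Finset.ext
    intro u
    simp only [Finset.mem_filter]
    constructor
    · rintro ⟨h1, h2⟩
      refine ⟨h1, ?_⟩
      have : u ≠ m := fun e => hmU (e ▸ h1)
      omega
    · rintro ⟨h1, h2⟩
      exact ⟨h1, by omega⟩
  unfold pB
  rw [hset]

lemma qB_pred (hmU : m+1 ∉ Uset N I) : qB N I m = qB N I (m+1) := by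
  have hset : (Uset N I).filter (fun u => m < u) = (Uset N I).filter (fun u => m+1 < u) := by
    apply Finset.ext
    intro u
    simp only [Finset.mem_filter]
    constructor
    · rintro ⟨h1, h2⟩
      refine ⟨h1, ?_⟩
      have : u ≠ m+1 := fun e => hmU (e ▸ h1)
      omega
    · rintro ⟨h1, h2⟩
      exact ⟨h1, by omega⟩
  unfold qB
  rw [hset]

lemma pB_eq (hm : 1 ≤ m) (h : m - 1 ∈ Uset N I) : pB N I m = m - 1 := by
  have h1 : pB N I m ≤ m - 1 := by have := pB_lt N I m hm; omega
  have h2 : m - 1 ≤ pB N I m := le_pB N I m hm (m-1) h (by omega)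
  omega

lemma qB_eq (hm : m < N) (h : m + 1 ∈ Uset N I) : qB N I m = m + 1 := by
  have h1 : m < qB N I m := qB_gt N I m hm
  have h2 : qB N I m ≤ m + 1 := qB_le N I m hm (m+1) h (by omega)
  omega

end pqB

noncomputable def Lc (N : ℕ) (x : Fin N → ℝ) (p q : ℕ) (u : ℝ) : ℝ :=
  (((q:ℝ) - u) * Sfun N x p + (u - (p:ℝ)) * Sfun N x q) / ((q:ℝ) - (p:ℝ))

noncomputable def beta (N : ℕ) (I : Finset (Fin (N-1))) (x : Fin N → ℝ) (m : ℕ) : ℝ :=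
  if m ∈ Uset N I ∨ N ≤ m then 0
  else Sfun N x m - Lc N x (pB N I m) (qB N I m) (m:ℝ)

lemma beta_memU (N : ℕ) (I : Finset (Fin (N-1))) (x : Fin N → ℝ) (m : ℕ)
    (h : m ∈ Uset N I) : beta N I x m = 0 := by
  unfold beta; rw [if_pos (Or.inl h)]

lemma beta_ge (N : ℕ) (I : Finset (Fin (N-1))) (x : Fin N → ℝ) (m : ℕ)
    (h : N ≤ m) : beta N I x m = 0 := by
  unfold beta; rw [if_pos (Or.inr h)]

lemma Sfun_diff (N : ℕ) (x : Fin N → ℝ) (a b : ℕ) (hab : a ≤ b) :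
    Sfun N x b - Sfun N x a = ∑ u ∈ Finset.Ico a b, (if h : u < N then x ⟨u, h⟩ else 0) := by
  unfold Sfun
  rw [Finset.sum_Ico_eq_sub _ hab]

lemma chord (N : ℕ) (x : Fin N → ℝ) (hx : StrictMono x) (p m q : ℕ)
    (hpm : p < m) (hmq : m < q) (hqN : q ≤ N) :
    ((q:ℝ) - p) * Sfun N x m < ((q:ℝ) - m) * Sfun N x p + ((m:ℝ) - p) * Sfun N x q := by
  set X : ℕ → ℝ := fun u => if h : u < N then x ⟨u, h⟩ else 0 with hX
  have hm1N : m - 1 < N := by omega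
  have hmN : m < N := by omega
  have hA : Sfun N x m - Sfun N x p ≤ ((m:ℝ) - p) * X (m-1) := by
    rw [Sfun_diff N x p m (by omega)]
    have := Finset.sum_le_card_nsmul (Finset.Ico p m) X (X (m-1)) (fun u hu => by
      have hu' := Finset.mem_Ico.mp hu
      simp only [hX]
      rw [dif_pos (by omega : u < N), dif_pos hm1N]
      rcases Nat.lt_or_ge u (m-1) with h | h
      · exact le_of_lt (hx (show (⟨u, by omega⟩ : Fin N) < ⟨m-1, hm1N⟩ from h))
      · have : u = m - 1 := by omega
        subst this; exact le_refl _)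
    rw [Nat.card_Ico] at this
    calc (∑ u ∈ Finset.Ico p m, X u) ≤ (m - p) • X (m-1) := this
      _ = ((m:ℝ) - p) * X (m-1) := by
          rw [nsmul_eq_mul]
          congr 1
          push_cast [Nat.cast_sub (le_of_lt hpm)]
          ring
  have hB : ((q:ℝ) - m) * X m ≤ Sfun N x q - Sfun N x m := by
    rw [Sfun_diff N x m q (by omega)]
    have := Finset.card_nsmul_le_sum (Finset.Ico m q) X (X m) (fun u hu => by
      have hu' := Finset.mem_Ico.mp hu
      simp only [hX]
      rw [dif_pos (by omega : u < N), dif_pos hmN]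
      rcases Nat.lt_or_ge m u with h | h
      · exact le_of_lt (hx (show (⟨m, hmN⟩ : Fin N) < ⟨u, by omega⟩ from h))
      · have : u = m := by omega
        subst this; exact le_refl _)
    rw [Nat.card_Ico] at this
    calc ((q:ℝ) - m) * X m = (q - m) • X m := by
          rw [nsmul_eq_mul]
          congr 1
          push_cast [Nat.cast_sub (le_of_lt hmq)]
          ring
      _ ≤ ∑ u ∈ Finset.Ico m q, X u := this
  have hC : X (m-1) < X m := by
    simp only [hX]
    rw [dif_pos hm1N, dif_pos hmN]
    exact hx (show (⟨m-1, hm1N⟩ : Fin N) < ⟨m, hmN⟩ from by simp [Fin.mk_lt_mk]; omega)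
  have ha : (0:ℝ) < (m:ℝ) - p := by
    have : (p:ℝ) < m := by exact_mod_cast hpm
    linarith
  have hb : (0:ℝ) < (q:ℝ) - m := by
    have : (m:ℝ) < q := by exact_mod_cast hmq
    linarith
  have key : ((q:ℝ) - m) * (Sfun N x m - Sfun N x p) < ((m:ℝ) - p) * (Sfun N x q - Sfun N x m) := by
    calc ((q:ℝ) - m) * (Sfun N x m - Sfun N x p)
        ≤ ((q:ℝ) - m) * (((m:ℝ) - p) * X (m-1)) := mul_le_mul_of_nonneg_left hA hb.le
      _ < ((q:ℝ) - m) * (((m:ℝ) - p) * X m) := by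
          apply mul_lt_mul_of_pos_left _ hb
          exact mul_lt_mul_of_pos_left hC ha
      _ = ((m:ℝ) - p) * (((q:ℝ) - m) * X m) := by ring
      _ ≤ ((m:ℝ) - p) * (Sfun N x q - Sfun N x m) := mul_le_mul_of_nonneg_left hB ha.le
  nlinarith [key]

lemma beta_neg (N : ℕ) (I : Finset (Fin (N-1))) (x : Fin N → ℝ) (hx : StrictMono x)
    (m : ℕ) (hmU : m ∉ Uset N I) (hmN : m < N) : beta N I x m < 0 := by
  have hm1 : 1 ≤ m := by
    rcases Nat.eq_zero_or_pos m with h | h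
    · exact absurd (h ▸ zero_mem_U N I) hmU
    · exact h
  unfold beta
  rw [if_neg (by push_neg; exact ⟨hmU, by omega⟩)]
  set p := pB N I m
  set q := qB N I m
  have hpm : p < m := pB_lt N I m hm1
  have hmq : m < q := qB_gt N I m hmN
  have hqN : q ≤ N := qB_le_N N I m hmN
  have hch := chord N x hx p m q hpm hmq hqN
  have hqp : (0:ℝ) < (q:ℝ) - p := by
    have h1 : (p:ℝ) < q := by exact_mod_cast lt_trans hpm hmq
    linarith
  unfold Lc
  rw [sub_neg, lt_div_iff₀ hqp]
  nlinarith [hch]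

lemma beta_nonpos (N : ℕ) (I : Finset (Fin (N-1))) (x : Fin N → ℝ) (hx : StrictMono x)
    (m : ℕ) : beta N I x m ≤ 0 := by
  by_cases h : m ∈ Uset N I ∨ N ≤ m
  · unfold beta; rw [if_pos h]
  · push_neg at h
    exact le_of_lt (beta_neg N I x hx m h.1 (by omega))

lemma Lc_affine (N : ℕ) (x : Fin N → ℝ) (p q : ℕ) (hpq : p < q) (u : ℝ) :
    Lc N x p q (u - 1) + Lc N x p q (u + 1) = 2 * Lc N x p q u := by
  have hqp : ((q:ℝ) - p) ≠ 0 := by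
    have : (p:ℝ) < q := by exact_mod_cast hpq
    linarith
  unfold Lc
  field_simp
  ring

lemma Lc_left (N : ℕ) (x : Fin N → ℝ) (p q : ℕ) (hpq : p < q) :
    Lc N x p q (p:ℝ) = Sfun N x p := by
  have hqp : ((q:ℝ) - p) ≠ 0 := by
    have : (p:ℝ) < q := by exact_mod_cast hpq
    linarith
  unfold Lc
  field_simp
  ring

lemma Lc_right (N : ℕ) (x : Fin N → ℝ) (p q : ℕ) (hpq : p < q) :
    Lc N x p q (q:ℝ) = Sfun N x q := by
  have hqp : ((q:ℝ) - p) ≠ 0 := by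
    have : (p:ℝ) < q := by exact_mod_cast hpq
    linarith
  unfold Lc
  field_simp
  ring

lemma beta_lap (N : ℕ) (I : Finset (Fin (N-1))) (x : Fin N → ℝ)
    (m : ℕ) (hmU : m ∉ Uset N I) (hmN : m < N) :
    2 * beta N I x m - beta N I x (m-1) - beta N I x (m+1)
      = 2 * Sfun N x m - Sfun N x (m-1) - Sfun N x (m+1) := by
  have hm1 : 1 ≤ m := by
    rcases Nat.eq_zero_or_pos m with h | h
    · exact absurd (h ▸ zero_mem_U N I) hmU
    · exact h
  set p := pB N I m with hp
  set q := qB N I m with hq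
  have hpm : p < m := pB_lt N I m hm1
  have hmq : m < q := qB_gt N I m hmN
  have hpq : p < q := lt_trans hpm hmq
  have hbm : beta N I x m = Sfun N x m - Lc N x p q (m:ℝ) := by
    unfold beta
    rw [if_neg (by push_neg; exact ⟨hmU, by omega⟩)]
  have hbm1 : beta N I x (m-1) = Sfun N x (m-1) - Lc N x p q ((m:ℝ)-1) := by
    have hcast : (((m-1 : ℕ)):ℝ) = (m:ℝ) - 1 := by
      push_cast [Nat.cast_sub hm1]; ring
    by_cases h1 : m - 1 ∈ Uset N I
    · rw [beta_memU N I x (m-1) h1]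
      have hpe : p = m - 1 := hp ▸ pB_eq N I m hm1 h1
      rw [show ((m:ℝ) - 1) = ((p:ℕ):ℝ) from by rw [hpe, hcast]]
      rw [Lc_left N x p q hpq]
      rw [hpe]
      ring
    · unfold beta
      rw [if_neg (by push_neg; exact ⟨h1, by omega⟩)]
      have e1 : pB N I (m-1) = p := by
        rw [hp]
        have := pB_succ N I (m-1) h1
        rw [show m - 1 + 1 = m from by omega] at this
        omega
      have e2 : qB N I (m-1) = q := by
        rw [hq]
        have := qB_pred N I (m-1) (by rw [show m - 1 + 1 = m from by omega]; exact hmU)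
        rw [show m - 1 + 1 = m from by omega] at this
        omega
      rw [e1, e2, hcast]
  have hbm2 : beta N I x (m+1) = Sfun N x (m+1) - Lc N x p q ((m:ℝ)+1) := by
    have hcast : (((m+1 : ℕ)):ℝ) = (m:ℝ) + 1 := by push_cast; ring
    by_cases h1 : m + 1 ∈ Uset N I
    · rw [beta_memU N I x (m+1) h1]
      have hqe : q = m + 1 := hq ▸ qB_eq N I m hmN h1
      rw [show ((m:ℝ) + 1) = ((q:ℕ):ℝ) from by rw [hqe, hcast]]
      rw [Lc_right N x p q hpq]
      rw [hqe]
      ring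
    · have hm1N : m + 1 < N := by
        rcases Nat.lt_or_ge (m+1) N with h | h
        · exact h
        · exfalso
          have : m + 1 = N := by omega
          exact h1 (this ▸ N_mem_U N I)
      unfold beta
      rw [if_neg (by push_neg; exact ⟨h1, by omega⟩)]
      have e1 : pB N I (m+1) = p := hp ▸ pB_succ N I m hmU
      have e2 : qB N I (m+1) = q := by
        rw [hq, qB_pred N I m h1]
      rw [e1, e2, hcast]
  have haff := Lc_affine N x p q hpq (m:ℝ)
  rw [hbm, hbm1, hbm2]
  linarith

lemma main_decomp (N : ℕ) (hN : 2 ≤ N) (I : Finset (Fin (N-1))) (x : Fin N → ℝ)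
    (hx : inNegChamberInt x) :
    ∃ c : Fin (N-1) → ℝ, x = combo N I c ∧ (∀ k ∈ I, c k < 0) ∧ (∀ k ∉ I, c k ≤ 0) := by
  obtain ⟨hsum, hmono⟩ := hx
  set β := beta N I x with hβ
  refine ⟨fun k =>
    if k ∈ I then (x ⟨(k:ℕ), by have := k.isLt; omega⟩ - x ⟨(k:ℕ)+1, by have := k.isLt; omega⟩)
      + β (k:ℕ) + β ((k:ℕ)+2)
    else β ((k:ℕ)+1), ?_, ?_, ?_⟩
  · set c : Fin (N-1) → ℝ := fun k =>
      if k ∈ I then (x ⟨(k:ℕ), by have := k.isLt; omega⟩ - x ⟨(k:ℕ)+1, by have := k.isLt; omega⟩)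
        + β (k:ℕ) + β ((k:ℕ)+2)
      else β ((k:ℕ)+1) with hc
    have hgb : ∀ m, gam N I c m = β m := by
      intro m
      unfold gam
      split_ifs with h1 h2
      · have hU : m ∈ Uset N I := by
          rw [mem_U_iff]
          exact Or.inr (Or.inr ⟨⟨m-1, by omega⟩, h2, by simp; omega⟩)
        rw [hβ, beta_memU N I x m hU]
      · have : c ⟨m-1, by omega⟩ = β ((m-1)+1) := by
          rw [hc]
          simp only [if_neg h2]
        rw [this, show (m-1)+1 = m from by omega]
      · push_neg at h1
        rcases Nat.eq_zero_or_pos m with h0 | h0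
        · rw [h0, hβ, beta_memU N I x 0 (zero_mem_U N I)]
        · have : N ≤ m := by have := h1 h0; omega
          rw [hβ, beta_ge N I x m this]
    apply eq_of_sum_and_diff (by omega : 0 < N)
    · rw [hsum, combo_sum N hN I c]
    · intro t ht
      have htI : t < N - 1 := by omega
      rw [combo_diff N hN I c t ht htI, hgb, hgb, hgb]
      by_cases htI' : (⟨t, htI⟩ : Fin (N-1)) ∈ I
      · rw [if_pos htI']
        have hβt1 : β (t+1) = 0 := by
          rw [hβ]
          exact beta_memU N I x (t+1) ((mem_U_iff N I (t+1)).mpr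
            (Or.inr (Or.inr ⟨⟨t, htI⟩, htI', rfl⟩)))
        have hct : c ⟨t, htI⟩ = (x ⟨t, by omega⟩ - x ⟨t+1, ht⟩) + β t + β (t+2) := by
          rw [hc]; simp only [if_pos htI']
        rw [hct, hβt1]
        ring
      · rw [if_neg htI']
        have hU : t+1 ∉ Uset N I := by
          rw [mem_U_iff]
          push_neg
          refine ⟨by omega, by omega, ?_⟩
          intro i hi he
          have : i = ⟨t, htI⟩ := Fin.ext (show (i:ℕ) = t by omega)
          exact htI' (this ▸ hi)
        have hlap := beta_lap N I x (t+1) hU (by omega)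
        rw [show t+1-1 = t from rfl] at hlap
        have e1 : Sfun N x (t+1) = Sfun N x t + x ⟨t, by omega⟩ := Sfun_succ N x t (by omega)
        have e2 : Sfun N x (t+1+1) = Sfun N x (t+1) + x ⟨t+1, ht⟩ := Sfun_succ N x (t+1) ht
        rw [show t+2 = t+1+1 from rfl] at hlap
        simp only [← hβ] at hlap
        linarith
  · intro k hk
    simp only [if_pos hk]
    have h1 : x ⟨(k:ℕ), by have := k.isLt; omega⟩ < x ⟨(k:ℕ)+1, by have := k.isLt; omega⟩ :=
      hmono (by simp [Fin.mk_lt_mk])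
    have h2 := beta_nonpos N I x hmono (k:ℕ)
    have h3 := beta_nonpos N I x hmono ((k:ℕ)+2)
    rw [← hβ] at h2 h3
    linarith
  · intro k hk
    simp only [if_neg hk]
    have := beta_nonpos N I x hmono ((k:ℕ)+1)
    rw [← hβ] at this
    exact this

lemma combo_apply' (N : ℕ) (I : Finset (Fin (N-1))) (c : Fin (N-1) → ℝ) (t : Fin N) :
    combo N I c t = (∑ i ∈ I, c i * evec N i t) + ∑ i ∈ Iᶜ, c i * fvec N i t := by
  rw [combo_split]
  simp [Finset.sum_apply]

lemma combo_inj (N : ℕ) (hN : 2 ≤ N) (I : Finset (Fin (N-1))) (c c' : Fin (N-1) → ℝ)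
    (h : combo N I c = combo N I c') : c = c' := by
  have key := indep N hN I (fun k => c k - c' k) (fun t => by
    have h1 := congrFun h t
    rw [combo_apply', combo_apply'] at h1
    simp only [sub_mul, Finset.sum_sub_distrib]
    linarith)
  funext k
  have h2 : c k - c' k = 0 := key k
  linarith

lemma x0_chamber (N : ℕ) (hN : 2 ≤ N) :
    inNegChamberInt (fun j : Fin N => ((j:ℕ):ℝ) - ((N:ℝ)-1)/2) := by
  constructor
  · rw [Finset.sum_sub_distrib]
    have hnat := Finset.sum_range_id_mul_two N
    have h2 : (∑ j : Fin N, ((j:ℕ):ℝ)) * 2 = (N:ℝ) * ((N:ℝ)-1) := by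
      rw [Fin.sum_univ_eq_sum_range (fun i => ((i:ℕ):ℝ))]
      calc (∑ i ∈ Finset.range N, (i:ℝ)) * 2
          = (((∑ i ∈ Finset.range N, i) * 2 : ℕ) : ℝ) := by push_cast; ring
        _ = ((N * (N-1) : ℕ) : ℝ) := by rw [hnat]
        _ = (N:ℝ) * ((N:ℝ)-1) := by push_cast [Nat.cast_sub (by omega : 1 ≤ N)]; ring
    have h3 : ∑ _j : Fin N, ((N:ℝ)-1)/2 = (N:ℝ) * (((N:ℝ)-1)/2) := by
      rw [Finset.sum_const, Finset.card_univ, Fintype.card_fin, nsmul_eq_mul]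
    rw [h3]
    linarith
  · intro i j hij
    have : ((i:ℕ):ℝ) < ((j:ℕ):ℝ) := by exact_mod_cast hij
    simp only
    linarith

lemma converse (N : ℕ) (hN : 2 ≤ N) (I : Finset (Fin (N-1))) (a : Fin (N-1) → ℝ)
    (ha : ∀ i ∈ I, a i < 0) :
    ∃ b : Fin (N-1) → ℝ,
      inNegChamberInt ((∑ i ∈ I, a i • evec N i) + ∑ j ∈ Iᶜ, b j • fvec N j) := by
  set x0 : Fin N → ℝ := fun j => ((j:ℕ):ℝ) - ((N:ℝ)-1)/2 with hx0def
  obtain ⟨c0, hx0, hc0I, hc0c⟩ := main_decomp N hN I x0 (x0_chamber N hN)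
  have hE : ∀ t (ht : t+1 < N) (htI : t < N-1),
      (if (⟨t,htI⟩ : Fin (N-1)) ∈ I then c0 ⟨t,htI⟩ else 0)
        + (2 * gam N I c0 (t+1) - gam N I c0 t - gam N I c0 (t+2)) = -1 := by
    intro t ht htI
    have h1 := combo_diff N hN I c0 t ht htI
    have h2 : x0 ⟨t, by omega⟩ - x0 ⟨t+1, ht⟩ = -1 := by
      simp only [hx0def]
      push_cast
      ring
    rw [hx0] at h2
    rw [h1] at h2
    linarith
  set K : Fin (N-1) → ℝ := fun k => 1 + |(-1:ℝ) - c0 k| with hK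
  have hKpos : ∀ k, 0 < K k := fun k => by
    have := abs_nonneg ((-1:ℝ) - c0 k)
    simp only [hK]
    linarith
  obtain ⟨lam, hlam_pos, hlam_le⟩ : ∃ lam : ℝ, 0 < lam ∧ ∀ k ∈ I, lam * K k ≤ -(a k) := by
    by_cases hI : I.Nonempty
    · refine ⟨I.inf' hI (fun k => -(a k) / K k), ?_, ?_⟩
      · obtain ⟨k0, hk0, he⟩ := Finset.exists_mem_eq_inf' hI (fun k => -(a k) / K k)
        rw [he]
        exact div_pos (by linarith [ha k0 hk0]) (hKpos k0)
      · intro k hk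
        have h1 : I.inf' hI (fun k => -(a k) / K k) ≤ -(a k) / K k := Finset.inf'_le _ hk
        exact (le_div_iff₀ (hKpos k)).mp h1
    · exact ⟨1, one_pos, fun k hk => absurd ⟨k, hk⟩ hI⟩
  set c' : Fin (N-1) → ℝ := fun k => if k ∈ I then a k else lam * c0 k with hc'
  refine ⟨fun k => lam * c0 k, ?_⟩
  have hvec : (∑ i ∈ I, a i • evec N i) + ∑ j ∈ Iᶜ, (lam * c0 j) • fvec N j = combo N I c' := by
    rw [combo_split]
    congr 1
    · exact Finset.sum_congr rfl fun i hi => by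
        rw [show c' i = a i from by simp only [hc', if_pos hi]]
    · exact Finset.sum_congr rfl fun j hj => by
        rw [show c' j = lam * c0 j from by
          simp only [hc', if_neg (Finset.mem_compl.mp hj)]]
  rw [hvec]
  have hgam : ∀ m, gam N I c' m = lam * gam N I c0 m := by
    intro m
    unfold gam
    split_ifs with h1 h2
    · ring
    · simp only [hc', if_neg h2]
    · ring
  constructor
  · exact combo_sum N hN I c'
  · apply strictMono_of_succ
    intro t ht
    have htI : t < N - 1 := by omega
    have hdiff := combo_diff N hN I c' t ht htI
    rw [hgam, hgam, hgam] at hdiff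
    have hB := hE t ht htI
    rw [show (⟨t, Nat.lt_of_succ_lt ht⟩ : Fin N) = ⟨t, by omega⟩ from rfl]
    by_cases hmem : (⟨t,htI⟩ : Fin (N-1)) ∈ I
    · rw [if_pos hmem] at hdiff hB
      have hD : 2 * gam N I c0 (t+1) - gam N I c0 t - gam N I c0 (t+2)
          = -1 - c0 ⟨t,htI⟩ := by linarith
      have hdiff2 : combo N I c' ⟨t, by omega⟩ - combo N I c' ⟨t+1, ht⟩
          = c' ⟨t,htI⟩ + lam * (2 * gam N I c0 (t+1) - gam N I c0 t - gam N I c0 (t+2)) := by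
        rw [hdiff]; ring
      rw [hD] at hdiff2
      have hc't : c' ⟨t,htI⟩ = a ⟨t,htI⟩ := by simp only [hc', if_pos hmem]
      rw [hc't] at hdiff2
      have habs : (-1:ℝ) - c0 ⟨t,htI⟩ ≤ |(-1:ℝ) - c0 ⟨t,htI⟩| := le_abs_self _
      have hlK := hlam_le ⟨t,htI⟩ hmem
      have e1 : lam * K ⟨t,htI⟩ = lam + lam * |(-1:ℝ) - c0 ⟨t,htI⟩| := by
        simp only [hK]; ring
      have e2 : lam * ((-1:ℝ) - c0 ⟨t,htI⟩) ≤ lam * |(-1:ℝ) - c0 ⟨t,htI⟩| :=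
        mul_le_mul_of_nonneg_left habs hlam_pos.le
      have : combo N I c' ⟨t, by omega⟩ - combo N I c' ⟨t+1, ht⟩ < 0 := by
        have : lam * (-1 - c0 ⟨t,htI⟩) = lam * ((-1:ℝ) - c0 ⟨t,htI⟩) := by ring
        linarith [hdiff2]
      linarith
    · rw [if_neg hmem] at hdiff hB
      have hD : 2 * gam N I c0 (t+1) - gam N I c0 t - gam N I c0 (t+2) = -1 := by linarith
      have key : 2 * (lam * gam N I c0 (t+1)) - lam * gam N I c0 t - lam * gam N I c0 (t+2)
          = -lam := by
        have h3 : 2 * (lam * gam N I c0 (t+1)) - lam * gam N I c0 t - lam * gam N I c0 (t+2)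
            = lam * (2 * gam N I c0 (t+1) - gam N I c0 t - gam N I c0 (t+2)) := by ring
        rw [h3, hD]; ring
      have : combo N I c' ⟨t, by omega⟩ - combo N I c' ⟨t+1, ht⟩ < 0 := by
        rw [hdiff]
        linarith [key]
      linarith

end Stmt10

/-- The paper's sublemma on `σ_I` and `π_I`: every `x ∈ C₋°` decomposes uniquely as
`x = ∑_{i∈I} aᵢ eᵢ + ∑_{j∉I} bⱼ fⱼ` with `aᵢ < 0` and `bⱼ ≤ 0`; conversely any negative
coefficients `aᵢ` arise this way; hence the projection of `C₋°` onto `span{eᵢ : i ∈ I}`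
along `span{fⱼ : j ∉ I}` is exactly `{∑ aᵢ eᵢ : aᵢ < 0}`. -/
theorem stmt10 (N : ℕ) (hN : 2 ≤ N) (I : Finset (Fin (N - 1))) :
    (∀ x : Fin N → ℝ, inNegChamberInt x →
      ∃ c : Fin (N - 1) → ℝ,
        x = (∑ k, c k • (if k ∈ I then evec N k else fvec N k)) ∧
        (∀ c' : Fin (N - 1) → ℝ,
          x = (∑ k, c' k • (if k ∈ I then evec N k else fvec N k)) → c' = c) ∧
        (∀ k ∈ I, c k < 0) ∧ (∀ k ∉ I, c k ≤ 0)) ∧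
    (∀ a : Fin (N - 1) → ℝ, (∀ i ∈ I, a i < 0) →
      ∃ b : Fin (N - 1) → ℝ,
        inNegChamberInt ((∑ i ∈ I, a i • evec N i) + ∑ j ∈ Iᶜ, b j • fvec N j)) ∧
    ({ y : Fin N → ℝ |
        (∃ a : Fin (N - 1) → ℝ, y = ∑ i ∈ I, a i • evec N i) ∧
        ∃ x : Fin N → ℝ, inNegChamberInt x ∧
          ∃ b : Fin (N - 1) → ℝ, x - y = ∑ j ∈ Iᶜ, b j • fvec N j } =
      { y : Fin N → ℝ |
        ∃ a : Fin (N - 1) → ℝ, (∀ i ∈ I, a i < 0) ∧ y = ∑ i ∈ I, a i • evec N i }) := by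
  refine ⟨?_, ?_, ?_⟩
  · intro x hx
    obtain ⟨c, hxc, hcI, hcc⟩ := Stmt10.main_decomp N hN I x hx
    refine ⟨c, hxc, ?_, hcI, hcc⟩
    intro c' hc'
    exact Stmt10.combo_inj N hN I c' c (hc'.symm.trans hxc)
  · exact fun a ha => Stmt10.converse N hN I a ha
  · ext y
    simp only [Set.mem_setOf_eq]
    constructor
    · rintro ⟨⟨a, hy⟩, x, hx, b, hxy⟩
      set c' : Fin (N-1) → ℝ := fun k => if k ∈ I then a k else b k with hc'
      have hxc' : x = Stmt10.combo N I c' := by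
        have h1 : x = y + ∑ j ∈ Iᶜ, b j • fvec N j := by rw [← hxy]; abel
        rw [Stmt10.combo_split, h1, hy]
        congr 1
        · exact Finset.sum_congr rfl fun i hi => by
            rw [show c' i = a i from by simp only [hc', if_pos hi]]
        · exact Finset.sum_congr rfl fun j hj => by
            rw [show c' j = b j from by simp only [hc', if_neg (Finset.mem_compl.mp hj)]]
      obtain ⟨c, hxc, hcI, hcc⟩ := Stmt10.main_decomp N hN I x hx
      have hcc' : c' = c := Stmt10.combo_inj N hN I c' c (hxc'.symm.trans hxc)
      refine ⟨a, ?_, hy⟩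
      intro i hi
      have hai : a i = c i := by
        rw [← hcc']
        simp only [hc', if_pos hi]
      rw [hai]
      exact hcI i hi
    · rintro ⟨a, haneg, hy⟩
      refine ⟨⟨a, hy⟩, ?_⟩
      obtain ⟨b, hb⟩ := Stmt10.converse N hN I a haneg
      refine ⟨_, hb, b, ?_⟩
      rw [hy]
      exact add_sub_cancel_left _ _
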